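/- Let H be a Hopf algebra over a field k generated as an algebra by primitive elements, with antipode S, unit η, counit ε, m-fold multiplication m^{(n)} : H^{⊗n} → H and iterated coproduct Δ^{(n)} : H → H^{⊗n}. Then for every h ∈ H the sum Σ_{n ≥ 0} (m^{(n)} ∘ (η∘ε − id_H)^{⊗n} ∘ Δ^{(n)})(h) has only finitely many nonzero terms, and S(h) equals this sum. -/

import Mathlib

open TensorProduct

section Defs
variable (k H : Type*) [Field k] [Ring H] [Bialgebra k H]

/-- `Tp n` is the `(n+1)`-fold tensor power `H ⊗ (H ⊗ (⋯ ⊗ H))`. -/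
noncomputable def Tp : ℕ → ModuleCat k
  | 0 => ModuleCat.of k H
  | n + 1 => ModuleCat.of k (H ⊗[k] (Tp n))

/-- `Δ ⊗ id^{⊗ n} : H^{⊗(n+1)} → H^{⊗(n+2)}`, the coproduct applied to the first factor. -/
noncomputable def copFirst : (n : ℕ) → (Tp k H n →ₗ[k] Tp k H (n + 1))
  | 0 => (Coalgebra.comul : H →ₗ[k] H ⊗[k] H)
  | n + 1 =>
      (TensorProduct.assoc k H H (Tp k H n)).toLinearMap ∘ₗ
        TensorProduct.map (Coalgebra.comul : H →ₗ[k] H ⊗[k] H) LinearMap.id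

/-- the iterated coproduct `Δ^{(n+1)} : H → H^{⊗(n+1)}`, with `Δ^{(1)} = id`. -/
noncomputable def itCop : (n : ℕ) → (ModuleCat.of k H →ₗ[k] Tp k H n)
  | 0 => LinearMap.id
  | n + 1 => copFirst k H n ∘ₗ itCop n

/-- the factorwise map `f^{⊗(n+1)} : H^{⊗(n+1)} → H^{⊗(n+1)}` for `f : H → H`. -/
noncomputable def itMap (f : H →ₗ[k] H) : (n : ℕ) → (Tp k H n →ₗ[k] Tp k H n)
  | 0 => f
  | n + 1 => TensorProduct.map f (itMap f n)

/-- the iterated multiplication `m^{(n+1)} : H^{⊗(n+1)} → H`, with `m^{(1)} = id`. -/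
noncomputable def itMul : (n : ℕ) → (Tp k H n →ₗ[k] ModuleCat.of k H)
  | 0 => LinearMap.id
  | n + 1 => LinearMap.mul' k H ∘ₗ TensorProduct.map LinearMap.id (itMul n)

/-- primitive elements: `Δ(x) = x ⊗ 1 + 1 ⊗ x` -/
noncomputable def IsPrim (x : H) : Prop :=
  (Coalgebra.comul (R := k) x) = x ⊗ₜ[k] (1 : H) + (1 : H) ⊗ₜ[k] x

/-- `η∘ε − id_H : H → H` -/
noncomputable def unitCounitSubId : H →ₗ[k] H :=
  (Algebra.linearMap k H) ∘ₗ (Coalgebra.counit : H →ₗ[k] k) - (LinearMap.id : H →ₗ[k] H)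

/-- the `n`-th term `(m^{(n)} ∘ (η∘ε − id)^{⊗ n} ∘ Δ^{(n)})(h)` of the antipode series;
the term for `n = 0` is `(η∘ε)(h)`, and the term for `n + 1` uses `n + 1` tensor factors. -/
noncomputable def antipodeTerm (h : H) : ℕ → H
  | 0 => algebraMap k H (Coalgebra.counit (R := k) h)
  | n + 1 => itMul k H n (itMap k H (unitCounitSubId k H) n (itCop k H n h))

end Defs

section Conv2

variable {k H : Type*} [Field k] [Ring H] [Bialgebra k H]

/-- convolution product on `H →ₗ[k] H` -/
noncomputable def conv (f g : H →ₗ[k] H) : H →ₗ[k] H :=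
  LinearMap.mul' k H ∘ₗ TensorProduct.map f g ∘ₗ (Coalgebra.comul : H →ₗ[k] H ⊗[k] H)

/-- convolution unit `η ∘ ε` -/
noncomputable def eMap (k H : Type*) [Field k] [Ring H] [Bialgebra k H] : H →ₗ[k] H :=
  (Algebra.linearMap k H) ∘ₗ (Coalgebra.counit : H →ₗ[k] k)

lemma conv_unit_left (f : H →ₗ[k] H) : conv (eMap k H) f = f := by
  have h1 : TensorProduct.map (eMap k H) f
      = TensorProduct.map (Algebra.linearMap k H) f ∘ₗ LinearMap.rTensor H (Coalgebra.counit (R := k)) := by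
    apply TensorProduct.ext'
    intro x y
    simp [eMap]
  ext h
  have h2 := LinearMap.congr_fun (Coalgebra.rTensor_counit_comp_comul (R := k) (A := H)) h
  simp only [conv, LinearMap.comp_apply, h1, h2]
  simp [Algebra.TensorProduct.one_def]

lemma conv_unit_right (f : H →ₗ[k] H) : conv f (eMap k H) = f := by
  have h1 : TensorProduct.map f (eMap k H)
      = TensorProduct.map f (Algebra.linearMap k H) ∘ₗ LinearMap.lTensor H (Coalgebra.counit (R := k)) := by
    apply TensorProduct.ext'
    intro x y
    simp [eMap]
  ext h
  have h2 := LinearMap.congr_fun (Coalgebra.lTensor_counit_comp_comul (R := k) (A := H)) h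
  simp only [conv, LinearMap.comp_apply, h1, h2]
  simp [Algebra.TensorProduct.one_def]

lemma conv_assoc (a b c : H →ₗ[k] H) : conv (conv a b) c = conv a (conv b c) := by
  have key : LinearMap.mul' k H ∘ₗ TensorProduct.map (LinearMap.mul' k H ∘ₗ TensorProduct.map a b) c
      = (LinearMap.mul' k H ∘ₗ TensorProduct.map a (LinearMap.mul' k H ∘ₗ TensorProduct.map b c))
        ∘ₗ (TensorProduct.assoc k H H H).toLinearMap := by
    apply TensorProduct.ext_threefold
    intro x y z
    simp [mul_assoc]
  have e1 : conv (conv a b) c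
      = (LinearMap.mul' k H ∘ₗ TensorProduct.map (LinearMap.mul' k H ∘ₗ TensorProduct.map a b) c)
        ∘ₗ (LinearMap.rTensor H (Coalgebra.comul (R := k))) ∘ₗ (Coalgebra.comul (R := k) (A := H)) := by
    simp only [conv, ← LinearMap.comp_assoc]
    congr 1
    simp only [LinearMap.comp_assoc]
    congr 1
    apply TensorProduct.ext'
    intro x y
    simp
  have e2 : conv a (conv b c)
      = (LinearMap.mul' k H ∘ₗ TensorProduct.map a (LinearMap.mul' k H ∘ₗ TensorProduct.map b c))
        ∘ₗ (LinearMap.lTensor H (Coalgebra.comul (R := k))) ∘ₗ (Coalgebra.comul (R := k) (A := H)) := by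
    simp only [conv, ← LinearMap.comp_assoc]
    congr 1
    simp only [LinearMap.comp_assoc]
    congr 1
    apply TensorProduct.ext'
    intro x y
    simp
  have coas : ((TensorProduct.assoc k H H H).toLinearMap)
        ∘ₗ (LinearMap.rTensor H (Coalgebra.comul (R := k))) ∘ₗ (Coalgebra.comul (R := k) (A := H))
      = (LinearMap.lTensor H (Coalgebra.comul (R := k))) ∘ₗ (Coalgebra.comul (R := k) (A := H)) :=
    Coalgebra.coassoc (R := k) (A := H)
  rw [e1, e2, key, LinearMap.comp_assoc, coas]

lemma conv_sub_right (f a b : H →ₗ[k] H) : conv f (a - b) = conv f a - conv f b := by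
  ext h
  have : TensorProduct.map f (a - b) = TensorProduct.map f a - TensorProduct.map f b := by
    apply TensorProduct.ext'
    intro x y
    simp [TensorProduct.tmul_sub]
  simp [conv, this]

lemma conv_add_left (a b g : H →ₗ[k] H) : conv (a + b) g = conv a g + conv b g := by
  ext h
  simp [conv, map_add_left]

lemma conv_sub_left (a b g : H →ₗ[k] H) : conv (a - b) g = conv a g - conv b g := by
  ext h
  have : TensorProduct.map (a - b) g = TensorProduct.map a g - TensorProduct.map b g := by
    apply TensorProduct.ext'
    intro x y
    simp [TensorProduct.sub_tmul]
  simp [conv, this]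

end Conv2


section Structure
variable (k H : Type*) [Field k] [Ring H] [Bialgebra k H]

lemma assoc_natural {P Q : Type*} [AddCommMonoid P] [AddCommMonoid Q] [Module k P]
    [Module k Q] (g : P →ₗ[k] Q) :
    (TensorProduct.assoc k H H Q).toLinearMap ∘ₗ
      TensorProduct.map (Coalgebra.comul : H →ₗ[k] H ⊗[k] H) LinearMap.id ∘ₗ
      LinearMap.lTensor H g
    = LinearMap.lTensor H (LinearMap.lTensor H g) ∘ₗ
      (TensorProduct.assoc k H H P).toLinearMap ∘ₗ
      TensorProduct.map (Coalgebra.comul : H →ₗ[k] H ⊗[k] H) LinearMap.id := by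
  apply TensorProduct.ext'
  intro x y
  simp only [LinearMap.comp_apply, TensorProduct.map_tmul, LinearMap.lTensor_tmul,
    LinearMap.id_coe, id_eq]
  induction (Coalgebra.comul (R := k) x) using TensorProduct.induction_on with
  | zero => simp
  | tmul a b => simp [TensorProduct.assoc_tmul]
  | add u v hu hv => simp only [TensorProduct.add_tmul, map_add, hu, hv]

lemma itCop_succ (n : ℕ) : itCop k H (n + 1)
    = (LinearMap.lTensor H (itCop k H n)) ∘ₗ (Coalgebra.comul : H →ₗ[k] H ⊗[k] H) := by
  induction n with
  | zero =>
    show copFirst k H 0 ∘ₗ itCop k H 0 = _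
    rw [show itCop k H 0 = (LinearMap.id : H →ₗ[k] H) from rfl,
      show copFirst k H 0 = (Coalgebra.comul : H →ₗ[k] H ⊗[k] H) from rfl]
    show (Coalgebra.comul : H →ₗ[k] H ⊗[k] H) ∘ₗ LinearMap.id
      = LinearMap.lTensor H (LinearMap.id : H →ₗ[k] H) ∘ₗ (Coalgebra.comul : H →ₗ[k] H ⊗[k] H)
    rw [LinearMap.comp_id, LinearMap.lTensor_id, LinearMap.id_comp]
  | succ n ih =>
    show copFirst k H (n + 1) ∘ₗ itCop k H (n + 1) = _
    rw [ih]
    show ((TensorProduct.assoc k H H (Tp k H n)).toLinearMap ∘ₗ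
        TensorProduct.map (Coalgebra.comul : H →ₗ[k] H ⊗[k] H) LinearMap.id) ∘ₗ
        (LinearMap.lTensor H (itCop k H n)) ∘ₗ (Coalgebra.comul : H →ₗ[k] H ⊗[k] H)
      = LinearMap.lTensor H (LinearMap.lTensor H (itCop k H n) ∘ₗ
          (Coalgebra.comul : H →ₗ[k] H ⊗[k] H)) ∘ₗ (Coalgebra.comul : H →ₗ[k] H ⊗[k] H)
    have N : (TensorProduct.assoc k H H (Tp k H n)).toLinearMap ∘ₗ
          TensorProduct.map (Coalgebra.comul : H →ₗ[k] H ⊗[k] H) LinearMap.id ∘ₗ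
          (LinearMap.lTensor H (itCop k H n))
        = (LinearMap.lTensor H (LinearMap.lTensor H (itCop k H n))) ∘ₗ
          ((TensorProduct.assoc k H H H).toLinearMap ∘ₗ
            TensorProduct.map (Coalgebra.comul : H →ₗ[k] H ⊗[k] H) LinearMap.id) := by
      have := assoc_natural k H (itCop k H n)
      simp only [LinearMap.comp_assoc] at this ⊢
      exact this
    have coas' : (((TensorProduct.assoc k H H H).toLinearMap ∘ₗ
          TensorProduct.map (Coalgebra.comul : H →ₗ[k] H ⊗[k] H) LinearMap.id)) ∘ₗ
          (Coalgebra.comul : H →ₗ[k] H ⊗[k] H)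
        = LinearMap.lTensor H (Coalgebra.comul (R := k)) ∘ₗ (Coalgebra.comul : H →ₗ[k] H ⊗[k] H) := by
      rw [LinearMap.comp_assoc]
      exact Coalgebra.coassoc (R := k) (A := H)
    calc ((TensorProduct.assoc k H H (Tp k H n)).toLinearMap ∘ₗ
        TensorProduct.map (Coalgebra.comul : H →ₗ[k] H ⊗[k] H) LinearMap.id) ∘ₗ
        (LinearMap.lTensor H (itCop k H n)) ∘ₗ (Coalgebra.comul : H →ₗ[k] H ⊗[k] H)
        = ((TensorProduct.assoc k H H (Tp k H n)).toLinearMap ∘ₗ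
            TensorProduct.map (Coalgebra.comul : H →ₗ[k] H ⊗[k] H) LinearMap.id ∘ₗ
            (LinearMap.lTensor H (itCop k H n))) ∘ₗ (Coalgebra.comul : H →ₗ[k] H ⊗[k] H) := by
          simp only [LinearMap.comp_assoc]
      _ = ((LinearMap.lTensor H (LinearMap.lTensor H (itCop k H n))) ∘ₗ
            ((TensorProduct.assoc k H H H).toLinearMap ∘ₗ
              TensorProduct.map (Coalgebra.comul : H →ₗ[k] H ⊗[k] H) LinearMap.id)) ∘ₗ
            (Coalgebra.comul : H →ₗ[k] H ⊗[k] H) := by rw [N]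
      _ = (LinearMap.lTensor H (LinearMap.lTensor H (itCop k H n))) ∘ₗ
            (((TensorProduct.assoc k H H H).toLinearMap ∘ₗ
              TensorProduct.map (Coalgebra.comul : H →ₗ[k] H ⊗[k] H) LinearMap.id) ∘ₗ
            (Coalgebra.comul : H →ₗ[k] H ⊗[k] H)) := by simp only [LinearMap.comp_assoc]
      _ = (LinearMap.lTensor H (LinearMap.lTensor H (itCop k H n))) ∘ₗ
            LinearMap.lTensor H (Coalgebra.comul (R := k)) ∘ₗ
            (Coalgebra.comul : H →ₗ[k] H ⊗[k] H) := by rw [coas']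
      _ = LinearMap.lTensor H (LinearMap.lTensor H (itCop k H n) ∘ₗ
            (Coalgebra.comul : H →ₗ[k] H ⊗[k] H)) ∘ₗ (Coalgebra.comul : H →ₗ[k] H ⊗[k] H) := by
          rw [LinearMap.lTensor_comp, LinearMap.comp_assoc]

lemma itMapCop_succ (f : H →ₗ[k] H) (n : ℕ) :
    (itMap k H f (n + 1)) ∘ₗ (itCop k H (n + 1))
    = TensorProduct.map f ((itMap k H f n) ∘ₗ (itCop k H n)) ∘ₗ
        (Coalgebra.comul : H →ₗ[k] H ⊗[k] H) := by
  rw [itCop_succ]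
  show TensorProduct.map f (itMap k H f n) ∘ₗ
      (LinearMap.lTensor H (itCop k H n)) ∘ₗ (Coalgebra.comul : H →ₗ[k] H ⊗[k] H) = _
  rw [← LinearMap.comp_assoc]
  congr 1
  apply TensorProduct.ext'
  intro x y
  simp

lemma g_succ (f : H →ₗ[k] H) (n : ℕ) :
    (itMul k H (n + 1)) ∘ₗ (itMap k H f (n + 1)) ∘ₗ (itCop k H (n + 1))
    = conv f ((itMul k H n) ∘ₗ (itMap k H f n) ∘ₗ (itCop k H n)) := by
  rw [itMapCop_succ]
  show (LinearMap.mul' k H ∘ₗ TensorProduct.map LinearMap.id (itMul k H n)) ∘ₗ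
      TensorProduct.map f ((itMap k H f n) ∘ₗ (itCop k H n)) ∘ₗ
      (Coalgebra.comul : H →ₗ[k] H ⊗[k] H) = _
  rw [conv]
  simp only [← LinearMap.comp_assoc]
  congr 1
  simp only [LinearMap.comp_assoc]
  congr 1
  apply TensorProduct.ext'
  intro x y
  rfl

end Structure

section Tpow
variable (k H : Type*) [Field k] [Ring H] [Bialgebra k H]

/-- convolution powers of `η∘ε - id`, with `Tpow 0 = η∘ε`. -/
noncomputable def Tpow : ℕ → (H →ₗ[k] H)
  | 0 => eMap k H
  | n + 1 => conv (unitCounitSubId k H) (Tpow n)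

lemma gT_eq (n : ℕ) :
    (itMul k H n) ∘ₗ (itMap k H (unitCounitSubId k H) n) ∘ₗ (itCop k H n)
      = Tpow k H (n + 1) := by
  induction n with
  | zero =>
    show LinearMap.id ∘ₗ (unitCounitSubId k H) ∘ₗ LinearMap.id
      = conv (unitCounitSubId k H) (eMap k H)
    rw [conv_unit_right, LinearMap.id_comp, LinearMap.comp_id]
  | succ n ih =>
    rw [g_succ, ih]
    rfl

lemma antipodeTerm_eq (h : H) (n : ℕ) : antipodeTerm k H h n = Tpow k H n h := by
  cases n with
  | zero => rfl
  | succ n =>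
    show itMul k H n (itMap k H (unitCounitSubId k H) n (itCop k H n h)) = _
    rw [← gT_eq]
    rfl

lemma conv_Tpow_right (n : ℕ) :
    conv (Tpow k H n) (unitCounitSubId k H) = Tpow k H (n + 1) := by
  induction n with
  | zero =>
    show conv (eMap k H) _ = _
    rw [conv_unit_left, show Tpow k H 1 = conv (unitCounitSubId k H) (eMap k H) from rfl,
      conv_unit_right]
  | succ n ih =>
    show conv (conv (unitCounitSubId k H) (Tpow k H n)) _ = _
    rw [conv_assoc, ih]
    rfl

lemma telescope (p : ℕ) :
    conv (∑ n ∈ Finset.range (p + 1), Tpow k H n) LinearMap.id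
      = eMap k H - Tpow k H (p + 1) := by
  have hid : (LinearMap.id : H →ₗ[k] H) = eMap k H - unitCounitSubId k H := by
    rw [show unitCounitSubId k H = eMap k H - LinearMap.id from rfl, sub_sub_cancel]
  have step : ∀ n, conv (Tpow k H n) LinearMap.id = Tpow k H n - Tpow k H (n + 1) := by
    intro n
    rw [hid, conv_sub_right, conv_unit_right, conv_Tpow_right]
  induction p with
  | zero =>
    rw [Finset.sum_range_one, step]
    show Tpow k H 0 - Tpow k H 1 = _
    rfl
  | succ p ih =>
    rw [Finset.sum_range_succ, conv_add_left, ih, step]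
    abel

end Tpow

section Filtration
variable (k H : Type*) [Field k] [Ring H] [Bialgebra k H]

/-- span of `1` and the primitives -/
noncomputable def Vsub : Submodule k H :=
  Submodule.span k (insert (1 : H) {x : H | IsPrim k H x})

lemma one_mem_V : (1 : H) ∈ Vsub k H := Submodule.subset_span (Set.mem_insert _ _)

lemma prim_mem_V {x : H} (hx : IsPrim k H x) : x ∈ Vsub k H :=
  Submodule.subset_span (Set.mem_insert_of_mem _ hx)

lemma one_mem_pow (i : ℕ) : (1 : H) ∈ (Vsub k H) ^ i := by
  induction i with
  | zero => rw [pow_zero, Submodule.one_eq_span]; exact Submodule.subset_span rfl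
  | succ i ih =>
    rw [pow_succ']
    simpa using Submodule.mul_mem_mul (one_mem_V k H) ih

lemma pow_le_pow_V {i j : ℕ} (hij : i ≤ j) : (Vsub k H) ^ i ≤ (Vsub k H) ^ j := by
  induction j with
  | zero => rw [Nat.le_zero.mp hij]
  | succ j ih =>
    rcases Nat.lt_or_ge i (j + 1) with hlt | hge
    · refine le_trans (ih (Nat.lt_succ_iff.mp hlt)) ?_
      intro x hx
      rw [pow_succ]
      simpa using Submodule.mul_mem_mul hx (one_mem_V k H)
    · rw [Nat.le_antisymm hij hge]

lemma exists_pow_mem (hgen : Algebra.adjoin k {x : H | IsPrim k H x} = ⊤) (h : H) :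
    ∃ p, h ∈ (Vsub k H) ^ p := by
  have hmem : h ∈ Submodule.span k (↑(Submonoid.closure {x : H | IsPrim k H x})) := by
    rw [← Algebra.adjoin_eq_span, hgen]
    exact trivial
  refine Submodule.span_induction ?_ ?_ ?_ ?_ hmem
  · intro x hx
    refine Submonoid.closure_induction ?_ ?_ ?_ hx
    · intro y hy
      exact ⟨1, by simpa [pow_one] using prim_mem_V k H hy⟩
    · exact ⟨0, one_mem_pow k H 0⟩
    · rintro a b _ _ ⟨p, hp⟩ ⟨q, hq⟩
      exact ⟨p + q, by rw [pow_add]; exact Submodule.mul_mem_mul hp hq⟩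
  · exact ⟨0, zero_mem _⟩
  · rintro a b _ _ ⟨p, hp⟩ ⟨q, hq⟩
    exact ⟨max p q, Submodule.add_mem _ (pow_le_pow_V k H (le_max_left p q) hp)
      (pow_le_pow_V k H (le_max_right p q) hq)⟩
  · rintro c x _ ⟨p, hp⟩
    exact ⟨p, Submodule.smul_mem _ c hp⟩

/-- degree-`p` part of the induced filtration on `H ⊗ H` -/
noncomputable def Wsub (p : ℕ) : Submodule k (H ⊗[k] H) :=
  Submodule.span k {z | ∃ i j : ℕ, ∃ u v : H,
    i + j = p ∧ u ∈ (Vsub k H) ^ i ∧ v ∈ (Vsub k H) ^ j ∧ z = u ⊗ₜ[k] v}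

lemma W_mono (p : ℕ) : Wsub k H p ≤ Wsub k H (p + 1) := by
  refine Submodule.span_le.mpr ?_
  rintro z ⟨i, j, u, v, hij, hu, hv, rfl⟩
  exact Submodule.subset_span ⟨i + 1, j, u, v, by omega,
    pow_le_pow_V k H (Nat.le_succ i) hu, hv, rfl⟩

lemma comul_mem_W : ∀ p : ℕ, ∀ b ∈ (Vsub k H) ^ p,
    (Coalgebra.comul (R := k) b : H ⊗[k] H) ∈ Wsub k H p := by
  intro p
  induction p with
  | zero =>
    intro b hb
    rw [pow_zero] at hb
    obtain ⟨y, rfl⟩ := Submodule.mem_one.mp hb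
    have : (algebraMap k H y) = y • (1 : H) := Algebra.algebraMap_eq_smul_one y
    rw [this, map_smul]
    refine Submodule.smul_mem _ _ ?_
    have h1 : (Coalgebra.comul (R := k) (1 : H) : H ⊗[k] H) = (1 : H) ⊗ₜ[k] (1 : H) := by
      rw [Bialgebra.comul_one, Algebra.TensorProduct.one_def]
    rw [h1]
    exact Submodule.subset_span ⟨0, 0, 1, 1, rfl, one_mem_pow k H 0, one_mem_pow k H 0, rfl⟩
  | succ p ih =>
    intro b hb
    rw [pow_succ'] at hb
    refine Submodule.mul_induction_on hb ?_ ?_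
    · intro m hm c hc
      have hcW : (Coalgebra.comul (R := k) c : H ⊗[k] H) ∈ Wsub k H p := ih c hc
      -- reduce to generators of Vsub for m
      refine Submodule.span_induction (p := fun m _ =>
          (Coalgebra.comul (R := k) (m * c) : H ⊗[k] H) ∈ Wsub k H (p + 1)) ?_ ?_ ?_ ?_ hm
      · rintro x (rfl | hx)
        · rw [one_mul]
          exact W_mono k H p hcW
        · -- x primitive
          rw [Bialgebra.comul_mul, hx]
          -- (x ⊗ 1 + 1 ⊗ x) * comul c ∈ W (p+1)
          refine Submodule.span_induction (p := fun z _ =>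
              (x ⊗ₜ[k] (1 : H) + (1 : H) ⊗ₜ[k] x) * z ∈ Wsub k H (p + 1)) ?_ ?_ ?_ ?_ hcW
          · rintro z ⟨i, j, u, v, hij, hu, hv, rfl⟩
            rw [add_mul, Algebra.TensorProduct.tmul_mul_tmul,
              Algebra.TensorProduct.tmul_mul_tmul, one_mul, one_mul]
            refine Submodule.add_mem _ ?_ ?_
            · refine Submodule.subset_span ⟨i + 1, j, x * u, v, by omega, ?_, hv, rfl⟩
              rw [pow_succ']
              exact Submodule.mul_mem_mul (prim_mem_V k H hx) hu
            · refine Submodule.subset_span ⟨i, j + 1, u, x * v, by omega, hu, ?_, rfl⟩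
              rw [pow_succ']
              exact Submodule.mul_mem_mul (prim_mem_V k H hx) hv
          · simp only [mul_zero]; exact zero_mem _
          · intro z w _ _ hz hw
            simp only [mul_add]; exact Submodule.add_mem _ hz hw
          · intro a z _ hz
            simp only [Algebra.mul_smul_comm]; exact Submodule.smul_mem _ a hz
      · simp only [zero_mul, map_zero]; exact zero_mem _
      · intro a b' _ _ ha hb'
        simp only [add_mul, map_add]; exact Submodule.add_mem _ ha hb'
      · intro a m' _ hm'
        simp only [Algebra.smul_mul_assoc, map_smul]; exact Submodule.smul_mem _ a hm'
    · intro a b' ha hb'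
      rw [map_add]; exact Submodule.add_mem _ ha hb'

end Filtration

section Vanish
variable (k H : Type*) [Field k] [Ring H] [Bialgebra k H]

/-- `(η∘ε - id)^{⊗(n+1)} ∘ Δ^{(n+1)}` as a linear map on `H` -/
noncomputable def psiApp (n : ℕ) : H →ₗ[k] Tp k H n :=
  (itMap k H (unitCounitSubId k H) n) ∘ₗ (itCop k H n)

lemma psiApp_succ (n : ℕ) : psiApp k H (n + 1)
    = TensorProduct.map (unitCounitSubId k H) (psiApp k H n) ∘ₗ
        (Coalgebra.comul : H →ₗ[k] H ⊗[k] H) :=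
  itMapCop_succ k H (unitCounitSubId k H) n

lemma psiApp_succ_apply (n : ℕ) (h : H) : psiApp k H (n + 1) h
    = TensorProduct.map (unitCounitSubId k H) (psiApp k H n) (Coalgebra.comul (R := k) h) :=
  LinearMap.congr_fun (psiApp_succ k H n) h

lemma T_one : unitCounitSubId k H (1 : H) = 0 := by
  simp [unitCounitSubId]

lemma T_deg_zero {u : H} (hu : u ∈ (Vsub k H) ^ 0) : unitCounitSubId k H u = 0 := by
  rw [pow_zero] at hu
  obtain ⟨y, rfl⟩ := Submodule.mem_one.mp hu
  rw [Algebra.algebraMap_eq_smul_one, map_smul, T_one, smul_zero]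

lemma psi_one : ∀ n : ℕ, psiApp k H n (1 : H) = 0 := by
  intro n
  induction n with
  | zero => exact T_one k H
  | succ n ih =>
    rw [psiApp_succ_apply, Bialgebra.comul_one,
      Algebra.TensorProduct.one_def, TensorProduct.map_tmul, T_one, TensorProduct.zero_tmul]
    rfl

lemma psi_vanish : ∀ p : ℕ, ∀ h ∈ (Vsub k H) ^ p, ∀ n : ℕ, p ≤ n →
    psiApp k H n h = 0 := by
  intro p
  induction p with
  | zero =>
    intro h hh n _
    rw [pow_zero] at hh
    obtain ⟨y, rfl⟩ := Submodule.mem_one.mp hh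
    rw [Algebra.algebraMap_eq_smul_one, map_smul, psi_one, smul_zero]
  | succ p ih =>
    intro h hh
    rw [pow_succ'] at hh
    refine Submodule.mul_induction_on (C := fun h => ∀ n : ℕ, p + 1 ≤ n →
        psiApp k H n h = 0) hh ?_ ?_
    · intro m hm c hc
      refine Submodule.span_induction (p := fun m _ => ∀ n : ℕ, p + 1 ≤ n →
          psiApp k H n (m * c) = 0) ?_ ?_ ?_ ?_ hm
      · rintro x (rfl | hx)
        · intro n hn
          rw [one_mul]
          exact ih c hc n (by omega)
        · -- x primitive
          rintro (_ | n') hn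
          · exact absurd hn (by omega)
          rw [psiApp_succ_apply, Bialgebra.comul_mul, hx]
          have hcW : (Coalgebra.comul (R := k) c : H ⊗[k] H) ∈ Wsub k H p :=
            comul_mem_W k H p c hc
          refine Submodule.span_induction (p := fun z _ =>
              (TensorProduct.map (unitCounitSubId k H) (psiApp k H n'))
                ((x ⊗ₜ[k] (1 : H) + (1 : H) ⊗ₜ[k] x) * z) = 0) ?_ ?_ ?_ ?_ hcW
          · rintro z ⟨i, j, u, v, hij, hu, hv, rfl⟩
            rw [add_mul, Algebra.TensorProduct.tmul_mul_tmul,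
              Algebra.TensorProduct.tmul_mul_tmul, one_mul, one_mul, map_add,
              TensorProduct.map_tmul, TensorProduct.map_tmul]
            have hv' : psiApp k H n' v = 0 :=
              ih v (pow_le_pow_V k H (by omega) hv) n' (by omega)
            rcases Nat.eq_zero_or_pos i with hi | hi
            · have hu0 : unitCounitSubId k H u = 0 := T_deg_zero k H (hi ▸ hu)
              rw [hv', hu0, TensorProduct.tmul_zero, TensorProduct.zero_tmul, add_zero]
            · have hxv : psiApp k H n' (x * v) = 0 := by
                have hxv' : x * v ∈ (Vsub k H) ^ (j + 1) := by
                  rw [pow_succ']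
                  exact Submodule.mul_mem_mul (prim_mem_V k H hx) hv
                exact ih (x * v) (pow_le_pow_V k H (by omega) hxv') n' (by omega)
              rw [hv', hxv, TensorProduct.tmul_zero, TensorProduct.tmul_zero, add_zero]
          · simp only [mul_zero, map_zero]
          · intro z w _ _ hz hw
            simp only [mul_add, map_add, hz, hw, add_zero]
          · intro a z _ hz
            simp only [Algebra.mul_smul_comm, map_smul, hz, smul_zero]
      · intro n hn
        simp only [zero_mul, map_zero]
      · intro a b _ _ ha hb n hn
        simp only [add_mul, map_add, ha n hn, hb n hn, add_zero]
      · intro a m' _ hm' n hn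
        simp only [Algebra.smul_mul_assoc, map_smul, hm' n hn, smul_zero]
    · intro a b ha hb n hn
      simp only [map_add, ha n hn, hb n hn, add_zero]

end Vanish

/-- For a Hopf algebra `H` over a field generated by primitive elements,
the series `Σ_{n ≥ 0} (m^{(n)} ∘ (η∘ε − id_H)^{⊗n} ∘ Δ^{(n)})(h)` has finitely many
nonzero terms and its (finite) sum equals `S(h)`, for every `h ∈ H`. -/
theorem antipode_formula_of_primitively_generated
    {k H : Type*} [Field k] [Ring H] [HopfAlgebra k H]
    (hgen : Algebra.adjoin k {x : H | IsPrim k H x} = ⊤) (h : H) :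
    (Function.support (antipodeTerm k H h)).Finite ∧
    HopfAlgebra.antipode (R := k) h = ∑ᶠ n : ℕ, antipodeTerm k H h n := by
  obtain ⟨p, hp⟩ := exists_pow_mem k H hgen h
  have hterm : ∀ m : ℕ, antipodeTerm k H h (m + 1) = itMul k H m (psiApp k H m h) :=
    fun m => rfl
  have hsupp : Function.support (antipodeTerm k H h) ⊆ ↑(Finset.range (p + 1)) := by
    intro n hn
    rw [Finset.mem_coe, Finset.mem_range]
    by_contra hcon
    push_neg at hcon
    refine Function.mem_support.mp hn ?_
    cases n with
    | zero => omega
    | succ m => rw [hterm m, psi_vanish k H p h hp m (by omega), map_zero]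
  refine ⟨Set.Finite.subset (Finset.finite_toSet _) hsupp, ?_⟩
  rw [finsum_eq_finset_sum_of_support_subset _ hsupp]
  have hFh : ∑ n ∈ Finset.range (p + 1), antipodeTerm k H h n
      = (∑ n ∈ Finset.range (p + 1), Tpow k H n) h := by
    rw [LinearMap.sum_apply]
    exact Finset.sum_congr rfl fun n _ => antipodeTerm_eq k H h n
  rw [hFh]
  have hS2 : conv (LinearMap.id) (HopfAlgebra.antipode (R := k) (A := H)) = eMap k H :=
    HopfAlgebra.mul_antipode_lTensor_comul
  have key : (∑ n ∈ Finset.range (p + 1), Tpow k H n)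
      = HopfAlgebra.antipode (R := k)
        - conv (Tpow k H (p + 1)) (HopfAlgebra.antipode (R := k)) := by
    calc (∑ n ∈ Finset.range (p + 1), Tpow k H n)
        = conv (∑ n ∈ Finset.range (p + 1), Tpow k H n) (eMap k H) :=
          (conv_unit_right _).symm
      _ = conv (∑ n ∈ Finset.range (p + 1), Tpow k H n)
            (conv LinearMap.id (HopfAlgebra.antipode (R := k))) := by rw [hS2]
      _ = conv (conv (∑ n ∈ Finset.range (p + 1), Tpow k H n) LinearMap.id)
            (HopfAlgebra.antipode (R := k)) := (conv_assoc _ _ _).symm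
      _ = conv (eMap k H - Tpow k H (p + 1)) (HopfAlgebra.antipode (R := k)) := by
          rw [telescope]
      _ = conv (eMap k H) (HopfAlgebra.antipode (R := k))
            - conv (Tpow k H (p + 1)) (HopfAlgebra.antipode (R := k)) :=
          conv_sub_left _ _ _
      _ = HopfAlgebra.antipode (R := k)
            - conv (Tpow k H (p + 1)) (HopfAlgebra.antipode (R := k)) := by
          rw [conv_unit_left]
  rw [key, LinearMap.sub_apply]
  have hzero : conv (Tpow k H (p + 1)) (HopfAlgebra.antipode (R := k)) h = 0 := by
    show (LinearMap.mul' k H)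
      ((TensorProduct.map (Tpow k H (p + 1)) (HopfAlgebra.antipode (R := k) (A := H)))
        (Coalgebra.comul (R := k) h)) = 0
    have hW := comul_mem_W k H p h hp
    refine Submodule.span_induction (p := fun z _ =>
        (LinearMap.mul' k H)
          ((TensorProduct.map (Tpow k H (p + 1)) (HopfAlgebra.antipode (R := k) (A := H)))
            z) = 0) ?_ ?_ ?_ ?_ hW
    · rintro z ⟨i, j, u, v, hij, hu, hv, rfl⟩
      rw [TensorProduct.map_tmul, LinearMap.mul'_apply]
      have hTu : Tpow k H (p + 1) u = 0 := by
        have h1 : itMul k H p (psiApp k H p u) = 0 := by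
          rw [psi_vanish k H i u hu p (by omega), map_zero]
        exact (LinearMap.congr_fun (gT_eq k H p) u).symm.trans h1
      rw [hTu, zero_mul]
    · simp
    · intro a b _ _ ha hb
      rw [map_add, map_add, ha, hb, add_zero]
    · intro a z _ hz
      rw [map_smul, map_smul, hz, smul_zero]
  rw [hzero, sub_zero]
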